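/- Let K be a field and let s₁, …, sₙ be monic polynomials in K[x] with s_i dividing s_{i+1} for 1 ≤ i < n, and set s₀ = 1. Let k be the number of indices i ∈ {1, …, n} such that the radical (squarefree part) of s_i is not associated to the radical of s_{i−1}. Then k·(k+1) ≤ 2·deg(s₁·s₂⋯sₙ). (Hence the number of such ramification indices is at most √(2d), where d is the degree of the product of the invariants.) -/

import Mathlib

open Polynomial

/-- Two nonzero polynomials have associated radicals (squarefree parts) exactly when
they have the same prime (irreducible) divisors. -/
def SamePrimeFactors {K : Type*} [Field K] (a b : Polynomial K) : Prop :=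
  ∀ p : Polynomial K, Prime p → (p ∣ a ↔ p ∣ b)

open UniqueFactorizationMonoid in
private lemma pf_card_le_natDegree {K : Type*} [Field K] [DecidableEq K] {a : Polynomial K} (ha : a ≠ 0) :
    (normalizedFactors a).toFinset.card ≤ a.natDegree := by
  classical
  refine le_trans (Multiset.toFinset_card_le _) ?_
  have hne : (0 : Polynomial K) ∉ normalizedFactors a := zero_notMem_normalizedFactors a
  have h1 : ((normalizedFactors a).prod).natDegree
      = ((normalizedFactors a).map natDegree).sum :=
    natDegree_multiset_prod _ hne
  have h2 : ((normalizedFactors a).prod).natDegree = a.natDegree := by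
    have := degree_eq_degree_of_associated (prod_normalizedFactors ha)
    exact natDegree_eq_of_degree_eq this
  have h3 : Multiset.card ((normalizedFactors a).map natDegree)
      ≤ ((normalizedFactors a).map natDegree).sum := by
    have : ∀ x ∈ (normalizedFactors a).map natDegree, 1 ≤ x := by
      intro x hx
      obtain ⟨p, hp, rfl⟩ := Multiset.mem_map.mp hx
      have hirr := irreducible_of_normalized_factor p hp
      exact natDegree_pos_iff_degree_pos.mpr (degree_pos_of_irreducible hirr)
    simpa using Multiset.card_nsmul_le_sum this
  have h3' : Multiset.card (normalizedFactors a)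
      ≤ ((normalizedFactors a).map natDegree).sum := by simpa using h3
  rw [← h1, h2] at h3'
  exact h3'

/-- For a divisibility chain `s₁ ∣ s₂ ∣ ⋯ ∣ sₙ` of monic polynomials (with `s₀ = 1`),
if `k` is the number of indices `i` where the squarefree part of `s i` is not
associated to the squarefree part of `s (i-1)` (i.e. where the set of prime factors
changes), then `k·(k+1) ≤ 2·deg(s₁⋯sₙ)`; hence `k ≤ √(2d)` where `d` is the degree of
the product of the invariants. -/
theorem ramification_count_bound
    {K : Type*} [Field K] (n : ℕ) (s : ℕ → Polynomial K)
    (hs0 : s 0 = 1)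
    (hmonic : ∀ i, 1 ≤ i → i ≤ n → (s i).Monic)
    (hdvd : ∀ i, 1 ≤ i → i < n → s i ∣ s (i + 1))
    (k : ℕ)
    (hk : k = Set.ncard {i : ℕ | 1 ≤ i ∧ i ≤ n ∧ ¬ SamePrimeFactors (s i) (s (i - 1))}) :
    k * (k + 1) ≤ 2 * (∏ i ∈ Finset.Icc 1 n, s i).natDegree := by
  classical
  open UniqueFactorizationMonoid in
  -- nonzeroness
  have hne : ∀ i, i ≤ n → s i ≠ 0 := by
    intro i hi
    rcases Nat.eq_zero_or_pos i with rfl | h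
    · simp [hs0]
    · exact (hmonic i h hi).ne_zero
  -- divisibility along the chain
  have hstep : ∀ i, i < n → s i ∣ s (i + 1) := by
    intro i hi
    rcases Nat.eq_zero_or_pos i with rfl | h
    · simp [hs0]
    · exact hdvd i h hi
  -- prime factor finsets
  set pf : Polynomial K → Finset (Polynomial K) :=
    fun a => (UniqueFactorizationMonoid.normalizedFactors a).toFinset with hpfdef
  have hpf_mono : ∀ i, i < n → pf (s i) ⊆ pf (s (i + 1)) := by
    intro i hi
    have h1 := (UniqueFactorizationMonoid.dvd_iff_normalizedFactors_le_normalizedFactors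
      (hne i (le_of_lt hi)) (hne (i + 1) hi)).mp (hstep i hi)
    exact Multiset.toFinset_subset.mpr (Multiset.subset_of_le h1)
  -- the set of change indices as a finset
  set T : Finset ℕ :=
    (Finset.Icc 1 n).filter (fun i => ¬ SamePrimeFactors (s i) (s (i - 1))) with hT
  have hkT : k = T.card := by
    rw [hk]
    have : {i : ℕ | 1 ≤ i ∧ i ≤ n ∧ ¬ SamePrimeFactors (s i) (s (i - 1))} = ↑T := by
      ext i
      simp [hT, Finset.mem_filter, Finset.mem_Icc, and_assoc]
    rw [this, Set.ncard_coe_finset]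
  -- counting function
  set c : ℕ → ℕ := fun i => ((T.filter (· ≤ i)).card) with hc
  -- at a change index, pf strictly grows
  have hgrow : ∀ i, i + 1 ≤ n → (i + 1) ∈ T →
      (pf (s i)).card + 1 ≤ (pf (s (i + 1))).card := by
    intro i hi hiT
    have hnot : ¬ SamePrimeFactors (s (i + 1)) (s i) := by
      have := (Finset.mem_filter.mp hiT).2
      simpa using this
    rw [SamePrimeFactors] at hnot
    push_neg at hnot
    obtain ⟨p, hp, hiff⟩ := hnot
    have hdvd1 : s i ∣ s (i + 1) := hstep i hi
    have hdp1 : p ∣ s (i + 1) ∧ ¬ p ∣ s i := by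
      rcases hiff with ⟨h1, h2⟩ | ⟨h1, h2⟩
      · exact ⟨h1, h2⟩
      · exact absurd (h2.trans hdvd1) h1
    obtain ⟨q, hq, hassoc⟩ :=
      UniqueFactorizationMonoid.exists_mem_normalizedFactors_of_dvd
        (hne (i + 1) hi) hp.irreducible hdp1.1
    have hqnot : q ∉ pf (s i) := by
      intro hmem
      have : q ∣ s i := UniqueFactorizationMonoid.dvd_of_mem_normalizedFactors
        (Multiset.mem_toFinset.mp hmem)
      exact hdp1.2 (hassoc.dvd.trans this)
    have hsub : insert q (pf (s i)) ⊆ pf (s (i + 1)) := by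
      intro x hx
      rcases Finset.mem_insert.mp hx with rfl | hx
      · exact Multiset.mem_toFinset.mpr hq
      · exact hpf_mono i hi hx
    calc (pf (s i)).card + 1 = (insert q (pf (s i))).card :=
          (Finset.card_insert_of_notMem hqnot).symm
      _ ≤ (pf (s (i + 1))).card := Finset.card_le_card hsub
  -- key induction: c i ≤ (pf (s i)).card for i ≤ n
  have hkey : ∀ i, i ≤ n → c i ≤ (pf (s i)).card := by
    intro i
    induction i with
    | zero =>
      intro _
      have h0 : (Finset.filter (fun x => x ≤ 0) T) = ∅ := by
        apply Finset.filter_eq_empty_iff.mpr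
        intro x hx
        have := (Finset.mem_Icc.mp (Finset.mem_of_mem_filter x hx)).1
        omega
      show (Finset.filter (fun x => x ≤ 0) T).card ≤ _
      rw [h0]
      simp
    | succ i ih =>
      intro hi
      have hi' : i ≤ n := le_of_lt hi
      have hsubfilter : T.filter (· ≤ i + 1) ⊆ insert (i + 1) (T.filter (· ≤ i)) := by
        intro x hx
        obtain ⟨hxT, hxle⟩ := Finset.mem_filter.mp hx
        rcases Nat.lt_or_ge x (i + 1) with h | h
        · exact Finset.mem_insert.mpr (Or.inr (Finset.mem_filter.mpr ⟨hxT, by omega⟩))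
        · have : x = i + 1 := by omega
          exact Finset.mem_insert.mpr (Or.inl this)
      by_cases hT1 : (i + 1) ∈ T
      · have h1 : c (i + 1) ≤ c i + 1 :=
          le_trans (Finset.card_le_card hsubfilter) (Finset.card_insert_le _ _)
        have h2 := hgrow i hi hT1
        have h3 := ih hi'
        omega
      · have heq : T.filter (· ≤ i + 1) = T.filter (· ≤ i) := by
          apply Finset.Subset.antisymm
          · intro x hx
            obtain ⟨hxT, hxle⟩ := Finset.mem_filter.mp hx
            have : x ≠ i + 1 := fun h => hT1 (h ▸ hxT)
            exact Finset.mem_filter.mpr ⟨hxT, by omega⟩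
          · intro x hx
            obtain ⟨hxT, hxle⟩ := Finset.mem_filter.mp hx
            exact Finset.mem_filter.mpr ⟨hxT, by omega⟩
        have : c (i + 1) = c i := by simp [hc, heq]
        rw [this]
        exact le_trans (ih hi') (Finset.card_le_card (hpf_mono i hi))
  -- c i ≤ natDegree (s i) for i ∈ Icc 1 n
  have hcdeg : ∀ i ∈ Finset.Icc 1 n, c i ≤ (s i).natDegree := by
    intro i hi
    obtain ⟨h1, h2⟩ := Finset.mem_Icc.mp hi
    exact le_trans (hkey i h2) (pf_card_le_natDegree (hne i h2))
  -- c is strictly monotone on T, with image exactly Icc 1 k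
  have hinj : Set.InjOn c ↑T := by
    have hmono : ∀ a ∈ T, ∀ b ∈ T, a < b → c a < c b := by
      intro a ha b hb hab
      apply Finset.card_lt_card
      constructor
      · intro x hx
        obtain ⟨hxT, hxle⟩ := Finset.mem_filter.mp hx
        exact Finset.mem_filter.mpr ⟨hxT, by omega⟩
      · intro hsub
        have hbmem : b ∈ T.filter (· ≤ b) := Finset.mem_filter.mpr ⟨hb, le_refl b⟩
        have := Finset.mem_filter.mp (hsub hbmem)
        omega
    intro a ha b hb hab
    by_contra hne'
    rcases Nat.lt_or_ge a b with h | h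
    · exact absurd hab (Nat.ne_of_lt (hmono a ha b hb h))
    · have h' : b < a := by omega
      exact absurd hab.symm (Nat.ne_of_lt (hmono b hb a ha h'))
  have himage : T.image c = Finset.Icc 1 k := by
    apply Finset.eq_of_subset_of_card_le
    · intro m hm
      obtain ⟨i, hi, rfl⟩ := Finset.mem_image.mp hm
      refine Finset.mem_Icc.mpr ⟨?_, ?_⟩
      · have hmem : i ∈ T.filter (fun x => x ≤ i) := Finset.mem_filter.mpr ⟨hi, le_refl i⟩
        exact Finset.card_pos.mpr ⟨i, hmem⟩
      · rw [hkT]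
        exact Finset.card_le_card (Finset.filter_subset _ _)
    · rw [Finset.card_image_of_injOn hinj, Nat.card_Icc, hkT]
      omega
  have hsumT : ∑ i ∈ T, c i = ∑ m ∈ Finset.Icc 1 k, m := by
    rw [← himage, Finset.sum_image (fun a ha b hb => hinj ha hb)]
  -- Gauss sum
  have hgauss : 2 * ∑ m ∈ Finset.Icc 1 k, m = k * (k + 1) := by
    clear hk hkT hsumT himage
    induction k with
    | zero => simp
    | succ k ih =>
      rw [Finset.sum_Icc_succ_top (by omega), Nat.mul_add, ih]
      ring
  -- total degree
  have hprod : (∏ i ∈ Finset.Icc 1 n, s i).natDegree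
      = ∑ i ∈ Finset.Icc 1 n, (s i).natDegree := by
    apply natDegree_prod
    intro i hi
    exact hne i (Finset.mem_Icc.mp hi).2
  have hTsub : T ⊆ Finset.Icc 1 n := Finset.filter_subset _ _
  have hfinal : ∑ i ∈ T, c i ≤ ∑ i ∈ Finset.Icc 1 n, (s i).natDegree :=
    le_trans (Finset.sum_le_sum (fun i hi => hcdeg i (hTsub hi)))
      (Finset.sum_le_sum_of_subset hTsub)
  rw [hprod]
  omega
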